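/- Let G be a finite simple graph, let M be a maximum 2-matching of G, and let v be an isolated vertex of M. If v is adjacent in G to a vertex lying on a cycle component of M, then G has a maximum 2-matching with strictly fewer isolated vertices than M. -/

import Mathlib

open SimpleGraph

/-- A 2-matching of `G`: a spanning subgraph (given as a graph `M ≤ G` on the same
vertex set) in which every vertex has degree at most 2. -/
def SimpleGraph.IsTwoMatching {V : Type*} (G M : SimpleGraph V) : Prop :=
  M ≤ G ∧ ∀ v : V, (M.neighborSet v).ncard ≤ 2

/-- A maximum 2-matching of `G`: a 2-matching with the maximum number of edges. -/
def SimpleGraph.IsMaxTwoMatching {V : Type*} (G M : SimpleGraph V) : Prop :=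
  G.IsTwoMatching M ∧
    ∀ M' : SimpleGraph V, G.IsTwoMatching M' → M'.edgeSet.ncard ≤ M.edgeSet.ncard

/-- A path cover of `G`, encoded as a spanning linear forest: a spanning subgraph
`P ≤ G` with maximum degree at most 2 and no cycles.  Its connected components are
exactly the vertex-disjoint paths covering all vertices of `G`. -/
def SimpleGraph.IsPathCover {V : Type*} (G P : SimpleGraph V) : Prop :=
  P ≤ G ∧ (∀ v : V, (P.neighborSet v).ncard ≤ 2) ∧ P.IsAcyclic

/-- The size of a path cover: the number of paths, i.e. of connected components. -/
noncomputable def SimpleGraph.coverSize {V : Type*} (P : SimpleGraph V) : ℕ :=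
  Nat.card P.ConnectedComponent

/-- The number of 0-paths (isolated vertices) of a path cover / 2-matching. -/
noncomputable def SimpleGraph.numZeroPaths {V : Type*} (P : SimpleGraph V) : ℕ :=
  {v : V | P.neighborSet v = ∅}.ncard

/-- The number of 1-paths (connected components consisting of a single edge,
i.e. having exactly two vertices) of a path cover. -/
noncomputable def SimpleGraph.numOnePaths {V : Type*} (P : SimpleGraph V) : ℕ :=
  {c : P.ConnectedComponent | c.supp.ncard = 2}.ncard

/-- The number of connected components having at most two vertices. -/
noncomputable def SimpleGraph.numSmallComponents {V : Type*} (M : SimpleGraph V) : ℕ :=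
  {c : M.ConnectedComponent | c.supp.ncard ≤ 2}.ncard

/-- The number of cycle components of a 2-matching: the components in which
every vertex has degree exactly 2. -/
noncomputable def SimpleGraph.numCycleComponents {V : Type*} (M : SimpleGraph V) : ℕ :=
  {c : M.ConnectedComponent | ∀ v ∈ c.supp, (M.neighborSet v).ncard = 2}.ncard

/-- If an isolated vertex `v` of a maximum 2-matching `M` of `G` is
adjacent in `G` to a vertex `w` lying on a cycle component of `M` (a component all of
whose vertices have degree 2), then `G` has a maximum 2-matching with strictly fewer
isolated vertices than `M`. -/
theorem stmt11 {V : Type*} [Fintype V] (G M : SimpleGraph V)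
    (hM : G.IsMaxTwoMatching M) (v : V) (hv : M.neighborSet v = ∅)
    (w : V) (hadj : G.Adj v w)
    (hw : ∀ x : V, M.Reachable w x → (M.neighborSet x).ncard = 2) :
    ∃ M' : SimpleGraph V, G.IsMaxTwoMatching M' ∧
      M'.numZeroPaths < M.numZeroPaths := by
  classical
  have hMv : ∀ y, ¬ M.Adj v y := by
    intro y h
    have : y ∈ M.neighborSet v := h
    rw [hv] at this
    exact this
  have hw2 : (M.neighborSet w).ncard = 2 := hw w (Reachable.refl w)
  obtain ⟨u, u', huu', hset⟩ := Set.ncard_eq_two.mp hw2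
  have hu : M.Adj w u := by
    have : u ∈ M.neighborSet w := by rw [hset]; exact Set.mem_insert _ _
    exact this
  have hvw : v ≠ w := hadj.ne
  have hvu : v ≠ u := fun h => hMv w (h ▸ hu.symm)
  have hwu : w ≠ u := hu.ne
  have hvnw : v ∉ M.neighborSet w := fun h => hMv w (show M.Adj w v from h).symm
  have hunw : u ∈ M.neighborSet w := hu
  set M' : SimpleGraph V := SimpleGraph.fromEdgeSet
      (insert s(v, w) (M.edgeSet \ {s(u, w)})) with hM'def
  have hAdj : ∀ x y, M'.Adj x y ↔ ((x = v ∧ y = w) ∨ (x = w ∧ y = v)) ∨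
      (M.Adj x y ∧ ¬(x = u ∧ y = w) ∧ ¬(x = w ∧ y = u)) := by
    intro x y
    rw [hM'def, fromEdgeSet_adj, Set.mem_insert_iff, Set.mem_diff,
      Set.mem_singleton_iff, Sym2.eq_iff, Sym2.eq_iff, mem_edgeSet]
    constructor
    · rintro ⟨(h | ⟨hM1, hne⟩), hxy⟩
      · exact Or.inl h
      · exact Or.inr ⟨hM1, fun h => hne (Or.inl h), fun h => hne (Or.inr h)⟩
    · rintro (h | ⟨h1, h2, h3⟩)
      · refine ⟨Or.inl h, ?_⟩
        rcases h with ⟨rfl, rfl⟩ | ⟨rfl, rfl⟩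
        · exact hvw
        · exact hvw.symm
      · exact ⟨Or.inr ⟨h1, fun h => h.elim h2 h3⟩, h1.ne⟩
  -- neighbor sets
  have hNv : M'.neighborSet v = {w} := by
    ext y
    rw [mem_neighborSet, hAdj, Set.mem_singleton_iff]
    constructor
    · rintro ((⟨_, rfl⟩ | ⟨h, _⟩) | ⟨h, _⟩)
      · rfl
      · exact absurd h hvw
      · exact absurd h (hMv y)
    · rintro rfl; exact Or.inl (Or.inl ⟨rfl, rfl⟩)
  have hNw : M'.neighborSet w = insert v (M.neighborSet w \ {u}) := by
    ext y
    rw [mem_neighborSet, hAdj, Set.mem_insert_iff, Set.mem_diff, Set.mem_singleton_iff]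
    constructor
    · rintro ((⟨h, _⟩ | ⟨_, rfl⟩) | ⟨h1, _, h3⟩)
      · exact absurd h.symm hvw
      · exact Or.inl rfl
      · exact Or.inr ⟨h1, fun h => h3 ⟨rfl, h⟩⟩
    · rintro (rfl | ⟨h1, h2⟩)
      · exact Or.inl (Or.inr ⟨rfl, rfl⟩)
      · exact Or.inr ⟨h1, fun h => hwu h.1, fun h => h2 h.2⟩
  have hNu : M'.neighborSet u = M.neighborSet u \ {w} := by
    ext y
    rw [mem_neighborSet, hAdj, Set.mem_diff, Set.mem_singleton_iff]
    constructor
    · rintro ((⟨h, _⟩ | ⟨h, _⟩) | ⟨h1, h2, _⟩)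
      · exact absurd h.symm hvu
      · exact absurd h.symm hwu
      · exact ⟨h1, fun h => h2 ⟨rfl, h⟩⟩
    · rintro ⟨h1, h2⟩
      exact Or.inr ⟨h1, fun h => h2 h.2, fun h => hwu h.1.symm⟩
  have hNx : ∀ x, x ≠ v → x ≠ w → x ≠ u → M'.neighborSet x = M.neighborSet x := by
    intro x h1 h2 h3
    ext y
    rw [mem_neighborSet, hAdj, mem_neighborSet]
    constructor
    · rintro ((⟨h, _⟩ | ⟨h, _⟩) | ⟨h, _⟩)
      · exact absurd h h1
      · exact absurd h h2
      · exact h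
    · intro h
      exact Or.inr ⟨h, fun hc => h3 hc.1, fun hc => h2 hc.1⟩
  -- M' is a 2-matching
  have hle : M' ≤ G := by
    intro x y h
    rw [hAdj] at h
    rcases h with (⟨rfl, rfl⟩ | ⟨rfl, rfl⟩) | ⟨h, _⟩
    · exact hadj
    · exact hadj.symm
    · exact hM.1.1 h
  have hdeg : ∀ x, (M'.neighborSet x).ncard ≤ 2 := by
    intro x
    by_cases h1 : x = v
    · rw [h1, hNv]; simp
    by_cases h2 : x = w
    · rw [h2, hNw, Set.ncard_exchange hvnw hunw, hw2]
    by_cases h3 : x = u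
    · rw [h3, hNu]
      exact le_trans (Set.ncard_le_ncard Set.diff_subset (Set.toFinite _)) (hM.1.2 u)
    · rw [hNx x h1 h2 h3]; exact hM.1.2 x
  -- edge count
  have hES : M'.edgeSet = insert s(v, w) (M.edgeSet \ {s(u, w)}) := by
    rw [hM'def, edgeSet_fromEdgeSet, sdiff_eq_left]
    rw [Set.disjoint_left]
    rintro e (rfl | ⟨he, _⟩) hd
    · exact hvw (Sym2.mk_isDiag_iff.mp hd)
    · exact M.not_isDiag_of_mem_edgeSet he hd
  have hvwE : s(v, w) ∉ M.edgeSet := fun h => hMv w h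
  have huwE : s(u, w) ∈ M.edgeSet := hu.symm
  have hcard : M'.edgeSet.ncard = M.edgeSet.ncard := by
    rw [hES, Set.ncard_exchange hvwE huwE]
  refine ⟨M', ⟨⟨hle, hdeg⟩, fun M'' h => (hM.2 M'' h).trans hcard.symm.le⟩, ?_⟩
  -- fewer isolated vertices
  have hss : {x : V | M'.neighborSet x = ∅} ⊂ {x : V | M.neighborSet x = ∅} := by
    constructor
    · intro x hx
      simp only [Set.mem_setOf_eq] at hx ⊢
      by_cases h1 : x = v
      · rw [h1, hNv] at hx
        exact absurd hx (Set.singleton_ne_empty w)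
      by_cases h2 : x = w
      · rw [h2, hNw] at hx
        exact absurd hx (Set.insert_nonempty _ _).ne_empty
      by_cases h3 : x = u
      · rw [h3, hNu] at hx
        have hu2 : (M.neighborSet u).ncard = 2 := hw u hu.reachable
        obtain ⟨a, b, hab, hab2⟩ := Set.ncard_eq_two.mp hu2
        have hmem : a ∈ M.neighborSet u \ {w} ∨ b ∈ M.neighborSet u \ {w} := by
          by_cases haw : a = w
          · right
            refine ⟨by rw [hab2]; exact Set.mem_insert_iff.mpr (Or.inr rfl), ?_⟩
            simp only [Set.mem_singleton_iff]
            exact fun hbw => hab (haw.trans hbw.symm)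
          · left
            exact ⟨by rw [hab2]; exact Set.mem_insert _ _, haw⟩
        rcases hmem with h | h <;> rw [hx] at h <;> exact h.elim
      · rw [hNx x h1 h2 h3] at hx; exact hx
    · intro hsub
      have : v ∈ {x : V | M'.neighborSet x = ∅} := hsub hv
      simp only [Set.mem_setOf_eq, hNv] at this
      exact (Set.singleton_ne_empty w) this
  exact Set.ncard_lt_ncard hss (Set.toFinite _)
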